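/- Let n ≥ 1, α > 0 and p ≥ 2. Let Y be a Banach space and T : F^p_α → Y a (p,2)-summing operator. Then for every δ > 0 and every δ-lattice {z_j} in ℂⁿ with covering multiplicity at most N at radius δ, one has ∑_{j=1}^∞ ‖T(k_{z_j})‖_Y^p ≤ C·π_{p,2}(T)^p, where C depends only on n, p, α, δ, N. -/

import Mathlib

open MeasureTheory Metric ENNReal
open scoped ENNReal NNReal ComplexConjugate

noncomputable section

/-- `ℂⁿ` with the Euclidean metric and Lebesgue measure. -/
abbrev Cn (n : ℕ) := EuclideanSpace ℂ (Fin n)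

instance (n : ℕ) : MeasurableSpace (Cn n) := borel _
instance (n : ℕ) : BorelSpace (Cn n) := ⟨rfl⟩

/-- Lebesgue measure on `ℂⁿ ≅ ℝ^{2n}`, normalized by an orthonormal real basis. -/
instance (n : ℕ) : MeasureSpace (Cn n) := ⟨(stdOrthonormalBasis ℝ (Cn n)).toBasis.addHaar⟩

/-- The Hermitian pairing `⟨w,z⟩ = ∑ᵢ wᵢ · conj zᵢ`. -/
def herm {n : ℕ} (w z : Cn n) : ℂ := ∑ i, w i * conj (z i)

/-- The normalized reproducing kernel `k_z(w) = e^{α⟨w,z⟩ − α|z|²/2}` of `F²_α`. -/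
def fockKernel (n : ℕ) (α : ℝ) (z w : Cn n) : ℂ :=
  Complex.exp ((α : ℂ) * herm w z - ((α / 2 * ‖z‖ ^ 2 : ℝ) : ℂ))

/-- The weighted measure `e^{−αp|z|²/2} dv(z)`, so that `L^p_α = L^p` of this measure. -/
def wMeasure (n : ℕ) (p α : ℝ) : Measure (Cn n) :=
  (volume : Measure (Cn n)).withDensity fun z =>
    ENNReal.ofReal (Real.exp (-(α * p / 2) * ‖z‖ ^ 2))

/-- The `L^p_α`-norm `(∫ |f|^p e^{−αp|z|²/2} dv)^{1/p}`, valued in `ℝ≥0∞`. -/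
def eNormLpα (n : ℕ) (p α : ℝ) (f : Cn n → ℂ) : ℝ≥0∞ :=
  (∫⁻ z, ENNReal.ofReal (‖f z‖ ^ p * Real.exp (-(α * p / 2) * ‖z‖ ^ 2))) ^ (1 / p)

/-- The Bergman projection `P f(z) = ∫ e^{α⟨z,w⟩} f(w) e^{−α|w|²} dv(w)`. -/
def bergmanProj (n : ℕ) (α : ℝ) (f : Cn n → ℂ) (z : Cn n) : ℂ :=
  ∫ w, Complex.exp ((α : ℂ) * herm z w) * f w * ((Real.exp (-α * ‖w‖ ^ 2) : ℝ) : ℂ)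

/-- The Hankel operator `H_f g = f g − P(fg)`, as a function. -/
def hankel (n : ℕ) (α : ℝ) (f g : Cn n → ℂ) : Cn n → ℂ :=
  fun z => f z * g z - bergmanProj n α (fun w => f w * g w) z

/-- The symbol class `𝒮`: `f·k_z ∈ ⋃_{q ≥ 1} L^q_α` for every `z`. -/
def symbolClass (n : ℕ) (α : ℝ) (f : Cn n → ℂ) : Prop :=
  ∀ z : Cn n, ∃ q : ℝ, 1 ≤ q ∧
    MemLp (fun w => f w * fockKernel n α z w) (ENNReal.ofReal q) (wMeasure n q α)

/-- `G_{p,ρ}(f)(z)`: the distance of `f` to holomorphic functions in the normalized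
`L^p`-metric of the ball `B(z,ρ)`. -/
def Gfun (n : ℕ) (p ρ : ℝ) (f : Cn n → ℂ) (z : Cn n) : ℝ :=
  ⨅ h : {h : Cn n → ℂ // DifferentiableOn ℂ h (ball z ρ)},
    (((∫⁻ w in ball z ρ, ENNReal.ofReal (‖f w - h.1 w‖ ^ p)) /
        volume (ball z ρ)).toReal) ^ (1 / p)

/-- Membership in `IDA^{s,p}`. -/
def memIDA (n : ℕ) (s p : ℝ) (f : Cn n → ℂ) : Prop :=
  LocallyIntegrable (fun z => ‖f z‖ ^ p) (volume : Measure (Cn n)) ∧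
    (∫⁻ z, ENNReal.ofReal (Gfun n p 1 f z ^ s)) < ∞

/-- The `IDA^{s,p}`-norm `(∫ G_p(f)^s dv)^{1/s}`. -/
def idaNorm (n : ℕ) (s p : ℝ) (f : Cn n → ℂ) : ℝ :=
  ((∫⁻ z, ENNReal.ofReal (Gfun n p 1 f z ^ s)).toReal) ^ (1 / s)

/-- The exponent `κ = κ(p,r)` of the main theorem. -/
def kappaPR (p r : ℝ) : ℝ :=
  if p ≤ 2 then 2
  else if r ≤ p / (p - 1) then p / (p - 1)
  else if r ≤ p then r
  else p

/-- `T : X → Y` is `(q,r)`-summing with constant `C`: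
`(∑ₖ ‖T xₖ‖^q)^{1/q} ≤ C · sup_{‖x*‖ ≤ 1} (∑ₖ |x*(xₖ)|^r)^{1/r}`
for all finite sequences. -/
def IsSummingWith {X Y : Type*} [NormedAddCommGroup X] [NormedSpace ℂ X]
    [NormedAddCommGroup Y] (q r : ℝ) (T : X → Y) (C : ℝ) : Prop :=
  ∀ (m : ℕ) (x : Fin m → X) (D : ℝ),
    (∀ φ : X →L[ℂ] ℂ, ‖φ‖ ≤ 1 → (∑ k, ‖φ (x k)‖ ^ r) ^ (1 / r) ≤ D) →
    (∑ k, ‖T (x k)‖ ^ q) ^ (1 / q) ≤ C * D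

instance factOneLeOfReal (p : ℝ) [hp : Fact ((1 : ℝ) ≤ p)] :
    Fact ((1 : ℝ≥0∞) ≤ ENNReal.ofReal p) :=
  ⟨by simpa using ENNReal.one_le_ofReal.mpr hp.out⟩

instance factOneLeOneReal : Fact ((1 : ℝ) ≤ (1 : ℝ)) := ⟨le_refl _⟩

/-- The Fock space `F^p_α` as a submodule of `L^p_α`: the a.e. classes having an
entire representative. -/
def FockSubmodule (n : ℕ) (p α : ℝ) :
    Submodule ℂ (Lp ℂ (ENNReal.ofReal p) (wMeasure n p α)) where
  carrier := {f | ∃ g : Cn n → ℂ, Differentiable ℂ g ∧ (f : Cn n → ℂ) =ᵐ[wMeasure n p α] g}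
  add_mem' := by
    rintro f₁ f₂ ⟨g₁, hg₁, he₁⟩ ⟨g₂, hg₂, he₂⟩
    exact ⟨g₁ + g₂, hg₁.add hg₂, (Lp.coeFn_add f₁ f₂).trans (he₁.add he₂)⟩
  zero_mem' := ⟨0, differentiable_const 0, Lp.coeFn_zero ℂ _ _⟩
  smul_mem' := by
    rintro c f ⟨g, hg, he⟩
    exact ⟨c • g, hg.const_smul c, (Lp.coeFn_smul c f).trans (he.const_smul c)⟩

/-- The Fock space `F^p_α`, as a normed space. -/
abbrev FockSpace (n : ℕ) (p α : ℝ) := ↥(FockSubmodule n p α)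

/-- A continuous linear operator `T : F^p_α → L^p_α` extends the Hankel operator `H_f`
(which is densely defined on the span of the normalized reproducing kernels). -/
def ExtendsHankel (n : ℕ) (p α : ℝ) [Fact ((1 : ℝ) ≤ p)] (f : Cn n → ℂ)
    (T : FockSpace n p α →L[ℂ] Lp ℂ (ENNReal.ofReal p) (wMeasure n p α)) : Prop :=
  ∀ (z : Cn n) (g : FockSpace n p α),
    ((g : Lp ℂ (ENNReal.ofReal p) (wMeasure n p α)) : Cn n → ℂ)
        =ᵐ[wMeasure n p α] fockKernel n α z →
    ((T g : Lp ℂ (ENNReal.ofReal p) (wMeasure n p α)) : Cn n → ℂ)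
        =ᵐ[wMeasure n p α] hankel n α f (fockKernel n α z)

/-- The measure defining `L^p_α(dμ)`, namely `e^{−αp|z|²/2} dμ(z)`. -/
def wMeasureμ (n : ℕ) (p α : ℝ) (μ : Measure (Cn n)) : Measure (Cn n) :=
  μ.withDensity fun z => ENNReal.ofReal (Real.exp (-(α * p / 2) * ‖z‖ ^ 2))

/-- A continuous linear operator `T : F^p_α → L^p_α(dμ)` is the identity embedding:
it sends each element of the Fock space to (the `L^p(dμ)`-class of) its entire
representative. -/
def IsEmbeddingInto (n : ℕ) (p α : ℝ) [Fact ((1 : ℝ) ≤ p)] (μ : Measure (Cn n))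
    (T : FockSpace n p α →L[ℂ] Lp ℂ (ENNReal.ofReal p) (wMeasureμ n p α μ)) : Prop :=
  ∀ (g : FockSpace n p α) (G : Cn n → ℂ), Differentiable ℂ G →
    ((g : Lp ℂ (ENNReal.ofReal p) (wMeasure n p α)) : Cn n → ℂ) =ᵐ[wMeasure n p α] G →
    ((T g : Lp ℂ (ENNReal.ofReal p) (wMeasureμ n p α μ)) : Cn n → ℂ) =ᵐ[wMeasureμ n p α μ] G

/-- `{z_j}` is a `δ`-lattice: the balls `B(z_j, δ)` cover `ℂⁿ` and the balls
`B(z_j, bδ)` are pairwise disjoint for some `b > 0`. -/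
def IsLattice (n : ℕ) (δ : ℝ) (zs : ℕ → Cn n) : Prop :=
  (∀ w : Cn n, ∃ j, w ∈ ball (zs j) δ) ∧
    ∃ b : ℝ, 0 < b ∧ Pairwise fun i j => Disjoint (ball (zs i) (b * δ)) (ball (zs j) (b * δ))

/-- Every point of `ℂⁿ` lies in at most `N` of the balls `B(z_j, ρ)`. -/
def CoverMult (n : ℕ) (ρ : ℝ) (zs : ℕ → Cn n) (N : ℕ) : Prop :=
  ∀ w : Cn n, Set.Finite {j | w ∈ ball (zs j) ρ} ∧ Set.ncard {j | w ∈ ball (zs j) ρ} ≤ N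

/-- The averaged function `μ̂_δ(z) = μ(B(z,δ))/|B(z,δ)|`, valued in `ℝ≥0∞`. -/
def avgE (n : ℕ) (μ : Measure (Cn n)) (δ : ℝ) (z : Cn n) : ℝ≥0∞ :=
  μ (ball z δ) / volume (ball z δ)

/-- The `t`-Berezin transform `μ̃_t(z) = ∫ |k_z(w)|^t e^{−αt|w|²/2} dμ(w)`, valued in `ℝ≥0∞`. -/
def berezinE (n : ℕ) (α t : ℝ) (μ : Measure (Cn n)) (z : Cn n) : ℝ≥0∞ :=
  ∫⁻ w, ENNReal.ofReal (‖fockKernel n α z w‖ ^ t * Real.exp (-(α * t / 2) * ‖w‖ ^ 2)) ∂μ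

end
noncomputable section AuxFockProof

namespace AuxFockProof

open Complex MeasureTheory

variable {n : ℕ}

instance : (volume : Measure (Cn n)).IsAddHaarMeasure :=
  isAddHaarMeasure_basis_addHaar _

lemma integrable_gauss {c : ℝ} (hc : 0 < c) :
    Integrable (fun w : Cn n => Real.exp (-c * ‖w‖ ^ 2)) := by
  have h := (GaussianFourier.integrable_cexp_neg_mul_sq_norm_add (V := Cn n)
      (b := (c : ℂ)) (by simpa using hc) 0 0).norm
  refine h.congr (Filter.Eventually.of_forall fun w => ?_)
  simp only [Complex.norm_exp]
  congr 1
  simp [← Complex.ofReal_pow]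

lemma herm_eq_inner (w z : Cn n) : herm w z = (inner ℂ z w : ℂ) := by
  rw [herm, PiLp.inner_apply]
  exact Finset.sum_congr rfl fun i _ => by rw [RCLike.inner_apply, mul_comm]

lemma norm_fockKernel (α : ℝ) (z w : Cn n) :
    ‖fockKernel n α z w‖ * Real.exp (-(α / 2) * ‖w‖ ^ 2)
      = Real.exp (-(α / 2) * ‖w - z‖ ^ 2) := by
  rw [fockKernel, Complex.norm_exp, ← Real.exp_add]
  congr 1
  have h1 : ((α : ℂ) * herm w z - ((α / 2 * ‖z‖ ^ 2 : ℝ) : ℂ)).re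
      = α * (herm w z).re - α / 2 * ‖z‖ ^ 2 := by
    rw [Complex.sub_re, Complex.ofReal_re, Complex.mul_re, Complex.ofReal_re, Complex.ofReal_im]
    ring
  have h2 : (herm w z).re = (inner ℂ w z : ℂ).re := by
    rw [herm_eq_inner, ← inner_conj_symm, Complex.conj_re]
  have h3 : ‖w - z‖ ^ 2 = ‖w‖ ^ 2 - 2 * (inner ℂ w z : ℂ).re + ‖z‖ ^ 2 := by
    have := @norm_sub_sq ℂ (Cn n) _ _ _ w z
    simpa using this
  rw [h1, h2, h3]
  ring

lemma continuous_fockKernel (α : ℝ) (z : Cn n) : Continuous (fockKernel n α z) := by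
  have h : Continuous fun w : Cn n => (inner ℂ z w : ℂ) :=
    continuous_const.inner continuous_id
  have h2 : Continuous fun w : Cn n =>
      (α : ℂ) * herm w z - ((α / 2 * ‖z‖ ^ 2 : ℝ) : ℂ) := by
    simp only [herm_eq_inner]
    exact (continuous_const.mul h).sub continuous_const
  exact Complex.continuous_exp.comp h2

/-- uniform bound for the lattice sums of Gaussians, from separation. -/
lemma sep_sum_bound {α : ℝ} (hα : 0 < α) {ρ : ℝ} (hρ : 0 < ρ) {zs : ℕ → Cn n}
    (hdisj : Pairwise fun i j => Disjoint (Metric.ball (zs i) ρ) (Metric.ball (zs j) ρ)) :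
    ∃ S : ℝ, 1 ≤ S ∧ ∀ (s : Finset ℕ) (w : Cn n),
      ∑ j ∈ s, Real.exp (-(α / 2) * ‖w - zs j‖ ^ 2) ≤ S := by
  set θ := α / 2 * ρ ^ 2 with hθ
  set f0 : Cn n → ℝ := fun u => Real.exp (-(α / 4) * ‖u‖ ^ 2) with hf0
  have hI : Integrable f0 := integrable_gauss (by linarith)
  set V := (volume (Metric.ball (0 : Cn n) ρ)).toReal with hV
  have hVpos : 0 < V := by
    rw [hV]
    exact ENNReal.toReal_pos (measure_ball_pos _ _ hρ).ne' measure_ball_lt_top.ne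
  set Itot := ∫ u : Cn n, f0 u with hIt
  have hItot0 : 0 ≤ Itot := integral_nonneg fun u => (Real.exp_pos _).le
  refine ⟨max 1 (Real.exp θ * Itot / V), le_max_left _ _, fun s w => ?_⟩
  refine le_trans ?_ (le_max_right _ _)
  have hIcomp : Integrable (fun u : Cn n => Real.exp (-(α / 4) * ‖w - u‖ ^ 2)) := by
    refine (hI.comp_sub_right w).congr (Filter.Eventually.of_forall fun u => ?_)
    rw [hf0]
    simp only []
    rw [norm_sub_rev]
  have key : ∀ j, Real.exp (-(α / 2) * ‖w - zs j‖ ^ 2) * (Real.exp (-θ) * V)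
      ≤ ∫ u in Metric.ball (zs j) ρ, Real.exp (-(α / 4) * ‖w - u‖ ^ 2) := by
    intro j
    have hμball : volume (Metric.ball (zs j) ρ) = volume (Metric.ball (0 : Cn n) ρ) :=
      Measure.addHaar_ball_center _ _ _
    have hmin : ∀ u ∈ Metric.ball (zs j) ρ,
        Real.exp (-(α / 2) * ‖w - zs j‖ ^ 2) * Real.exp (-θ)
          ≤ Real.exp (-(α / 4) * ‖w - u‖ ^ 2) := by
      intro u hu
      rw [← Real.exp_add]
      apply Real.exp_le_exp.mpr
      have h1 : ‖w - u‖ ≤ ‖w - zs j‖ + ρ := by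
        have h2 : dist w u ≤ dist w (zs j) + dist (zs j) u := dist_triangle _ _ _
        have h3 : dist (zs j) u < ρ := by
          rw [dist_comm]; exact Metric.mem_ball.mp hu
        rw [dist_eq_norm, dist_eq_norm] at h2
        linarith
      have h4 : (0:ℝ) ≤ ‖w - u‖ := norm_nonneg _
      have h5 : (0:ℝ) ≤ ‖w - zs j‖ := norm_nonneg _
      rw [hθ]
      nlinarith [mul_le_mul_of_nonneg_left (mul_self_le_mul_self h4 h1) hα.le,
        mul_le_mul_of_nonneg_left (sq_nonneg (‖w - zs j‖ - ρ)) hα.le]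
    have hle := setIntegral_ge_of_const_le_real (μ := volume) measurableSet_ball
      (by rw [hμball]; exact measure_ball_lt_top.ne) hmin hIcomp.integrableOn
    calc Real.exp (-(α / 2) * ‖w - zs j‖ ^ 2) * (Real.exp (-θ) * V)
        = Real.exp (-(α / 2) * ‖w - zs j‖ ^ 2) * Real.exp (-θ)
            * (volume (Metric.ball (zs j) ρ)).toReal := by rw [hμball, ← hV]; ring
      _ ≤ _ := hle
  set A := ∑ j ∈ s, Real.exp (-(α / 2) * ‖w - zs j‖ ^ 2) with hA
  have hsum : A * (Real.exp (-θ) * V) ≤ Itot := by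
    rw [hA, Finset.sum_mul]
    calc ∑ j ∈ s, Real.exp (-(α / 2) * ‖w - zs j‖ ^ 2) * (Real.exp (-θ) * V)
        ≤ ∑ j ∈ s, ∫ u in Metric.ball (zs j) ρ, Real.exp (-(α / 4) * ‖w - u‖ ^ 2) :=
          Finset.sum_le_sum fun j _ => key j
      _ = ∫ u in ⋃ j ∈ s, Metric.ball (zs j) ρ, Real.exp (-(α / 4) * ‖w - u‖ ^ 2) := by
          rw [integral_biUnion_finset s (fun j _ => measurableSet_ball)
            (fun i _ j _ hij => hdisj hij) (fun j _ => hIcomp.integrableOn)]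
      _ ≤ ∫ u, Real.exp (-(α / 4) * ‖w - u‖ ^ 2) :=
          setIntegral_le_integral hIcomp (Filter.Eventually.of_forall fun u => (Real.exp_pos _).le)
      _ = Itot := by
          rw [hIt]
          have : (fun u : Cn n => Real.exp (-(α / 4) * ‖w - u‖ ^ 2))
              = fun u => f0 (u - w) := by
            funext u
            rw [hf0]
            simp only []
            rw [norm_sub_rev]
          rw [this, integral_sub_right_eq_self f0 w]
  have hee : Real.exp θ * Real.exp (-θ) = 1 := by
    rw [← Real.exp_add]; simp
  have hA0 : 0 ≤ A := Finset.sum_nonneg fun j _ => (Real.exp_pos _).le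
  rw [le_div_iff₀ hVpos]
  calc A * V = Real.exp θ * (A * (Real.exp (-θ) * V)) := by
        rw [show Real.exp θ * (A * (Real.exp (-θ) * V))
            = (Real.exp θ * Real.exp (-θ)) * (A * V) by ring, hee, one_mul]
    _ ≤ Real.exp θ * Itot := mul_le_mul_of_nonneg_left hsum (Real.exp_pos θ).le

/-- Elementary real inequality, via Cauchy-Schwarz. -/
lemma pow_sum_bound {p S : ℝ} (hp2 : 2 ≤ p) (hS : 1 ≤ S) {m : ℕ} (c : Fin m → ℂ)
    (a : Fin m → ℝ) (ha0 : ∀ k, 0 ≤ a k) (ha1 : ∀ k, a k ≤ 1)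
    (hc : ∑ k, ‖c k‖ ^ 2 ≤ 1) (haS : ∑ k, a k ≤ S) :
    (∑ k, ‖c k‖ * a k) ^ p ≤ S ^ (p / 2) * ∑ k, ‖c k‖ ^ 2 * a k := by
  have hp0 : (0:ℝ) < p := by linarith
  set G := ∑ k, ‖c k‖ * a k with hG
  set T := ∑ k, ‖c k‖ ^ 2 * a k with hT
  have hG0 : 0 ≤ G := Finset.sum_nonneg fun k _ => mul_nonneg (norm_nonneg _) (ha0 k)
  have hT0 : 0 ≤ T := Finset.sum_nonneg fun k _ => mul_nonneg (sq_nonneg _) (ha0 k)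
  have hT1 : T ≤ 1 := by
    refine le_trans (le_trans (Finset.sum_le_sum fun k _ => ?_) hc) le_rfl
    calc ‖c k‖ ^ 2 * a k ≤ ‖c k‖ ^ 2 * 1 :=
          mul_le_mul_of_nonneg_left (ha1 k) (sq_nonneg _)
      _ = ‖c k‖ ^ 2 := mul_one _
  have hS0 : (0:ℝ) ≤ S := by linarith
  have hCS : G ^ 2 ≤ T * S := by
    have h1 : G = ∑ k, (‖c k‖ * Real.sqrt (a k)) * Real.sqrt (a k) := by
      refine Finset.sum_congr rfl fun k _ => ?_
      rw [mul_assoc, Real.mul_self_sqrt (ha0 k)]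
    have h2 := Finset.sum_mul_sq_le_sq_mul_sq Finset.univ
      (fun k => ‖c k‖ * Real.sqrt (a k)) (fun k => Real.sqrt (a k))
    rw [← h1] at h2
    have h3 : ∑ k, (‖c k‖ * Real.sqrt (a k)) ^ 2 = T := by
      refine Finset.sum_congr rfl fun k _ => ?_
      rw [mul_pow, Real.sq_sqrt (ha0 k)]
    have h4 : ∑ k, (Real.sqrt (a k)) ^ 2 = ∑ k, a k := by
      refine Finset.sum_congr rfl fun k _ => ?_
      exact Real.sq_sqrt (ha0 k)
    rw [h3, h4] at h2
    calc G ^ 2 ≤ T * ∑ k, a k := h2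
      _ ≤ T * S := mul_le_mul_of_nonneg_left haS hT0
  rcases eq_or_lt_of_le hT0 with h0 | hTpos
  · have hG2 : G = 0 := by nlinarith
    rw [hG2, Real.zero_rpow hp0.ne']
    positivity
  · have hGle : G ≤ Real.sqrt (T * S) :=
      (Real.le_sqrt hG0 (by positivity)).mpr hCS
    have h5 : G ^ p ≤ Real.sqrt (T * S) ^ p :=
      Real.rpow_le_rpow hG0 hGle hp0.le
    have h6 : Real.sqrt (T * S) ^ p = (T * S) ^ (p / 2) := by
      rw [Real.sqrt_eq_rpow, ← Real.rpow_mul (by positivity : (0:ℝ) ≤ T * S)]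
      congr 1
      ring
    have h7 : (T * S) ^ (p / 2) = T ^ (p / 2) * S ^ (p / 2) :=
      Real.mul_rpow hT0 hS0
    have h8 : T ^ (p / 2) ≤ T := by
      calc T ^ (p / 2) ≤ T ^ (1:ℝ) :=
            Real.rpow_le_rpow_of_exponent_ge hTpos hT1 (by linarith)
        _ = T := Real.rpow_one T
    calc G ^ p ≤ (T * S) ^ (p / 2) := by rw [← h6]; exact h5
      _ = T ^ (p / 2) * S ^ (p / 2) := h7
      _ ≤ T * S ^ (p / 2) := by
          apply mul_le_mul_of_nonneg_right h8 (by positivity)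
      _ = S ^ (p / 2) * T := mul_comm _ _

lemma Lp_coeFn_sum {δ : Type*} [MeasurableSpace δ] {μ : Measure δ}
    {q : ℝ≥0∞} {ι : Type*} (s : Finset ι) (f : ι → Lp ℂ (ENNReal.ofReal p) μ) :
    (((∑ i ∈ s, f i : Lp ℂ (ENNReal.ofReal p) μ)) : δ → ℂ) =ᵐ[μ] fun w => ∑ i ∈ s, (f i : δ → ℂ) w := by
  induction s using Finset.cons_induction with
  | empty => simp only [Finset.sum_empty]; exact Lp.coeFn_zero ℂ _ μ
  | cons i s hi ih =>
    rw [Finset.sum_cons]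
    filter_upwards [Lp.coeFn_add (f i) (∑ j ∈ s, f j), ih] with w h1 h2
    rw [h1, Pi.add_apply, h2]
    rw [Finset.sum_cons]

set_option maxHeartbeats 1000000 in
lemma fock_sum_norm_bound (n : ℕ) (α p : ℝ) (hα : 0 < α) [hp : Fact ((1:ℝ) ≤ p)]
    (hp2 : 2 ≤ p) {S : ℝ} (hS : 1 ≤ S) {zs : ℕ → Cn n}
    (hsep : ∀ (s : Finset ℕ) (w : Cn n),
      ∑ j ∈ s, Real.exp (-(α / 2) * ‖w - zs j‖ ^ 2) ≤ S)
    {M : ℝ} (hM0 : 0 ≤ M)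
    (hMle : S ^ (p / 2) * (∫ w : Cn n, Real.exp (-(α / 2) * ‖w‖ ^ 2)) ≤ M)
    {m : ℕ} (c : Fin m → ℂ) (hc : ∑ k, ‖c k‖ ^ 2 ≤ 1)
    (g : ℕ → FockSpace n p α)
    (hg : ∀ j, ((g j : Lp ℂ (ENNReal.ofReal p) (wMeasure n p α)) : Cn n → ℂ)
        =ᵐ[wMeasure n p α] fockKernel n α (zs j)) :
    ‖∑ k : Fin m, c k • g (k : ℕ)‖ ≤ M ^ (1 / p) := by
  have hp0 : (0:ℝ) < p := lt_of_lt_of_le one_pos hp.out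
  set μ := wMeasure n p α with hμ
  set Itot := ∫ w : Cn n, Real.exp (-(α / 2) * ‖w‖ ^ 2) with hItot
  have hI0 : 0 ≤ Itot := integral_nonneg fun w => (Real.exp_pos _).le
  set F : Cn n → ℂ := fun w => ∑ k : Fin m, c k * fockKernel n α (zs (k : ℕ)) w with hF
  set x : FockSpace n p α := ∑ k : Fin m, c k • g (k : ℕ) with hx
  -- Step A : identify the Lp representative
  have hcoe : ((x : Lp ℂ (ENNReal.ofReal p) μ)) = ∑ k : Fin m, c k • ((g (k : ℕ) : Lp ℂ (ENNReal.ofReal p) μ)) := by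
    rw [hx]
    push_cast
    rfl
  have hsmul : ∀ k : Fin m, (((c k • (g (k : ℕ) : Lp ℂ (ENNReal.ofReal p) μ)) : Lp ℂ (ENNReal.ofReal p) μ) : Cn n → ℂ)
      =ᵐ[μ] fun w => c k * fockKernel n α (zs (k : ℕ)) w := by
    intro k
    filter_upwards [Lp.coeFn_smul (c k) ((g (k : ℕ) : Lp ℂ (ENNReal.ofReal p) μ)), hg (k : ℕ)] with w h1 h2
    rw [h1, Pi.smul_apply, h2, smul_eq_mul]
  have hall : ∀ᵐ w ∂μ, ∀ k : Fin m,
      (((c k • (g (k : ℕ) : Lp ℂ (ENNReal.ofReal p) μ)) : Lp ℂ (ENNReal.ofReal p) μ) : Cn n → ℂ) w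
        = c k * fockKernel n α (zs (k : ℕ)) w := ae_all_iff.mpr hsmul
  have hFae : (((x : Lp ℂ (ENNReal.ofReal p) μ)) : Cn n → ℂ) =ᵐ[μ] F := by
    rw [hcoe]
    have hLp := Lp_coeFn_sum (μ := μ) (q := ENNReal.ofReal p)
      (Finset.univ : Finset (Fin m))
      (fun k => c k • (g (k : ℕ) : Lp ℂ (ENNReal.ofReal p) μ))
    filter_upwards [hLp, hall] with w h1 h2
    rw [h1, hF]
    exact Finset.sum_congr rfl fun k _ => h2 k
  -- Step B : norm as lintegral
  have hnorm : ‖x‖ = ((∫⁻ w, (‖F w‖₊ : ℝ≥0∞) ^ p ∂μ) ^ (1 / p)).toReal := by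
    have h1 : ‖x‖ = ‖(x : Lp ℂ (ENNReal.ofReal p) μ)‖ := rfl
    rw [h1, Lp.norm_def, eLpNorm_congr_ae hFae,
      eLpNorm_eq_lintegral_rpow_enorm_toReal
        (by simp only [Ne, ENNReal.ofReal_eq_zero, not_le]; exact hp0)
        ENNReal.ofReal_ne_top,
      ENNReal.toReal_ofReal hp0.le]
    rfl
  -- Step C : continuity/measurability
  have hFc : Continuous F := by
    apply continuous_finset_sum
    intro k _
    exact continuous_const.mul (continuous_fockKernel α (zs (k : ℕ)))
  have hDc : Continuous fun w : Cn n => Real.exp (-(α * p / 2) * ‖w‖ ^ 2) :=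
    Real.continuous_exp.comp (continuous_const.mul (continuous_norm.pow 2))
  have hDm : Measurable fun w : Cn n => ENNReal.ofReal (Real.exp (-(α * p / 2) * ‖w‖ ^ 2)) :=
    hDc.measurable.ennreal_ofReal
  have hFm : Measurable fun w => (‖F w‖₊ : ℝ≥0∞) ^ p :=
    ENNReal.continuous_rpow_const.measurable.comp
      hFc.measurable.nnnorm.coe_nnreal_ennreal
  -- Step D : pointwise bound
  set a : Cn n → Fin m → ℝ := fun w k => Real.exp (-(α / 2) * ‖w - zs (k : ℕ)‖ ^ 2) with ha
  have hpt : ∀ w : Cn n,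
      ENNReal.ofReal (Real.exp (-(α * p / 2) * ‖w‖ ^ 2)) * (‖F w‖₊ : ℝ≥0∞) ^ p
        ≤ ENNReal.ofReal (S ^ (p / 2) * ∑ k : Fin m, ‖c k‖ ^ 2 * a w k) := by
    intro w
    have h1 : ((‖F w‖₊ : ℝ≥0∞)) ^ p = ENNReal.ofReal (‖F w‖ ^ p) := by
      rw [← enorm_eq_nnnorm, ← ofReal_norm, ENNReal.ofReal_rpow_of_nonneg (norm_nonneg _) hp0.le]
    rw [h1, ← ENNReal.ofReal_mul (Real.exp_pos _).le]
    apply ENNReal.ofReal_le_ofReal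
    have e1 : Real.exp (-(α / 2) * ‖w‖ ^ 2) ^ p = Real.exp (-(α * p / 2) * ‖w‖ ^ 2) := by
      rw [Real.rpow_def_of_pos (Real.exp_pos _), Real.log_exp]
      congr 1
      ring
    calc Real.exp (-(α * p / 2) * ‖w‖ ^ 2) * ‖F w‖ ^ p
        = (‖F w‖ * Real.exp (-(α / 2) * ‖w‖ ^ 2)) ^ p := by
          rw [Real.mul_rpow (norm_nonneg _) (Real.exp_pos _).le, e1]
          ring
      _ ≤ (∑ k : Fin m, ‖c k‖ * a w k) ^ p := by
          apply Real.rpow_le_rpow (by positivity) ?_ hp0.le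
          calc ‖F w‖ * Real.exp (-(α / 2) * ‖w‖ ^ 2)
              ≤ (∑ k : Fin m, ‖c k‖ * ‖fockKernel n α (zs (k : ℕ)) w‖)
                  * Real.exp (-(α / 2) * ‖w‖ ^ 2) := by
                apply mul_le_mul_of_nonneg_right ?_ (Real.exp_pos _).le
                refine le_trans (norm_sum_le _ _) (le_of_eq ?_)
                exact Finset.sum_congr rfl fun k _ => norm_mul _ _
            _ = ∑ k : Fin m, ‖c k‖ * a w k := by
                rw [Finset.sum_mul]
                refine Finset.sum_congr rfl fun k _ => ?_
                rw [mul_assoc, norm_fockKernel]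
      _ ≤ S ^ (p / 2) * ∑ k : Fin m, ‖c k‖ ^ 2 * a w k := by
          refine pow_sum_bound hp2 hS c (a w) (fun k => (Real.exp_pos _).le)
            (fun k => ?_) hc ?_
          · calc a w k ≤ Real.exp 0 :=
                Real.exp_le_exp.mpr (by nlinarith [sq_nonneg ‖w - zs (k : ℕ)‖])
              _ = 1 := Real.exp_zero
          · calc ∑ k : Fin m, a w k
                = ∑ j ∈ Finset.range m, Real.exp (-(α / 2) * ‖w - zs j‖ ^ 2) :=
                  Fin.sum_univ_eq_sum_range
                    (fun j => Real.exp (-(α / 2) * ‖w - zs j‖ ^ 2)) m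
              _ ≤ S := hsep (Finset.range m) w
  -- Step E : integral bound
  have hIk : ∀ k : Fin m, Integrable (fun w : Cn n => a w k) := by
    intro k
    have h2 := (integrable_gauss (n := n)
      (show (0:ℝ) < α / 2 by linarith)).comp_sub_right (zs (k : ℕ))
    exact h2.congr (Filter.Eventually.of_forall fun w => rfl)
  have hIb : Integrable (fun w : Cn n => ∑ k : Fin m, ‖c k‖ ^ 2 * a w k) :=
    integrable_finset_sum _ fun k _ => (hIk k).const_mul _
  have hIb2 : Integrable
      (fun w : Cn n => S ^ (p / 2) * ∑ k : Fin m, ‖c k‖ ^ 2 * a w k) :=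
    hIb.const_mul _
  have hval : ∫ w : Cn n, (∑ k : Fin m, ‖c k‖ ^ 2 * a w k)
      = ∑ k : Fin m, ‖c k‖ ^ 2 * Itot := by
    rw [integral_finset_sum _ fun k _ => (hIk k).const_mul _]
    refine Finset.sum_congr rfl fun k _ => ?_
    rw [integral_const_mul]
    congr 1
    exact integral_sub_right_eq_self
      (fun u : Cn n => Real.exp (-(α / 2) * ‖u‖ ^ 2)) (zs (k : ℕ))
  have hintle : ∫⁻ w, (‖F w‖₊ : ℝ≥0∞) ^ p ∂μ ≤ ENNReal.ofReal M := by
    have hwd : ∫⁻ w, (‖F w‖₊ : ℝ≥0∞) ^ p ∂μ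
        = ∫⁻ w, ENNReal.ofReal (Real.exp (-(α * p / 2) * ‖w‖ ^ 2))
            * (‖F w‖₊ : ℝ≥0∞) ^ p := by
      rw [hμ, wMeasure, lintegral_withDensity_eq_lintegral_mul _ hDm hFm]
      rfl
    rw [hwd]
    calc ∫⁻ w, ENNReal.ofReal (Real.exp (-(α * p / 2) * ‖w‖ ^ 2))
            * (‖F w‖₊ : ℝ≥0∞) ^ p
        ≤ ∫⁻ w, ENNReal.ofReal
            (S ^ (p / 2) * ∑ k : Fin m, ‖c k‖ ^ 2 * a w k) := lintegral_mono hpt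
      _ = ENNReal.ofReal
            (∫ w : Cn n, S ^ (p / 2) * ∑ k : Fin m, ‖c k‖ ^ 2 * a w k) :=
          (ofReal_integral_eq_lintegral_ofReal hIb2
            (Filter.Eventually.of_forall fun w => by positivity)).symm
      _ ≤ ENNReal.ofReal M := by
          apply ENNReal.ofReal_le_ofReal
          rw [integral_const_mul, hval]
          calc S ^ (p / 2) * ∑ k : Fin m, ‖c k‖ ^ 2 * Itot
              = S ^ (p / 2) * ((∑ k : Fin m, ‖c k‖ ^ 2) * Itot) := by
                rw [Finset.sum_mul]
            _ ≤ S ^ (p / 2) * (1 * Itot) := by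
                apply mul_le_mul_of_nonneg_left
                  (mul_le_mul_of_nonneg_right hc hI0) (by positivity)
            _ = S ^ (p / 2) * Itot := by ring
            _ ≤ M := hMle
  -- Step F : conclude
  rw [hnorm]
  have hfin : (∫⁻ w, (‖F w‖₊ : ℝ≥0∞) ^ p ∂μ) ^ (1 / p)
      ≤ ENNReal.ofReal (M ^ (1 / p)) := by
    rw [← ENNReal.ofReal_rpow_of_nonneg hM0 (by positivity)]
    exact ENNReal.rpow_le_rpow hintle (by positivity)
  exact ENNReal.toReal_le_of_le_ofReal (Real.rpow_nonneg hM0 _) hfin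

end AuxFockProof

end AuxFockProof

/-- **Case 3 estimate in Theorem 3.3.** Let `p ≥ 2` and let `{z_j}` be a `δ`-lattice with
covering multiplicity at most `N` at radius `δ`. Then there is `C > 0` (depending only on
`n, p, α, δ, N`) such that every `(p,2)`-summing operator `T : F^p_α → Y` into a Banach
space `Y` satisfies `∑_j ‖T(k_{z_j})‖^p ≤ C π_{p,2}(T)^p`. -/
theorem p2_summing_kernel_sum_bound (n : ℕ) (hn : 1 ≤ n) (α p : ℝ) (hα : 0 < α)
    [hp : Fact ((1 : ℝ) ≤ p)] (hp2 : 2 ≤ p) (δ : ℝ) (hδ : 0 < δ)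
    (N : ℕ) (zs : ℕ → Cn n) (hlat : IsLattice n δ zs) (hN : CoverMult n δ zs N) :
    ∃ C : ℝ, 0 < C ∧
      ∀ (Y : Type u) [NormedAddCommGroup Y] [NormedSpace ℂ Y] [CompleteSpace Y]
        (T : FockSpace n p α →L[ℂ] Y) (C₀ : ℝ), 0 ≤ C₀ → IsSummingWith p 2 T C₀ →
        ∀ g : ℕ → FockSpace n p α,
          (∀ j, ((g j : Lp ℂ (ENNReal.ofReal p) (wMeasure n p α)) : Cn n → ℂ)
              =ᵐ[wMeasure n p α] fockKernel n α (zs j)) →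
          ∑' j, ENNReal.ofReal (‖T (g j)‖ ^ p) ≤ ENNReal.ofReal (C * C₀ ^ p) := by
  classical
  obtain ⟨-, b, hb, hdisj⟩ := hlat
  obtain ⟨S, hS1, hsep⟩ := AuxFockProof.sep_sum_bound hα (mul_pos hb hδ) hdisj
  have hp0 : (0:ℝ) < p := lt_of_lt_of_le one_pos hp.out
  have hS0 : (0:ℝ) ≤ S := by linarith
  have hI0 : (0:ℝ) ≤ ∫ w : Cn n, Real.exp (-(α / 2) * ‖w‖ ^ 2) :=
    integral_nonneg fun w => (Real.exp_pos _).le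
  set M := S ^ (p / 2) * ∫ w : Cn n, Real.exp (-(α / 2) * ‖w‖ ^ 2) with hM
  have hM0 : 0 ≤ M := mul_nonneg (Real.rpow_nonneg hS0 _) hI0
  refine ⟨M + 1, by linarith, ?_⟩
  intro Y _ _ _ T C₀ hC₀ hT g hg
  rw [ENNReal.tsum_eq_iSup_sum]
  refine iSup_le fun s => ?_
  set m := s.sup id + 1 with hm
  have hsub : s ⊆ Finset.range m := fun j hj =>
    Finset.mem_range.mpr (Nat.lt_succ_of_le (Finset.le_sup (f := id) hj))
  have hφ : ∀ φ : FockSpace n p α →L[ℂ] ℂ, ‖φ‖ ≤ 1 →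
      (∑ k : Fin m, ‖φ (g (k : ℕ))‖ ^ (2:ℝ)) ^ (1 / (2:ℝ)) ≤ M ^ (1 / p) := by
    intro φ hφ1
    have hb2 : (∑ k : Fin m, ‖φ (g (k : ℕ))‖ ^ (2:ℝ))
        = ∑ k : Fin m, ‖φ (g (k : ℕ))‖ ^ (2:ℕ) := by
      refine Finset.sum_congr rfl fun k _ => ?_
      rw [← Real.rpow_natCast ‖φ (g (k : ℕ))‖ 2]
      norm_num
    rw [hb2]
    set S2 := ∑ k : Fin m, ‖φ (g (k : ℕ))‖ ^ (2:ℕ) with hS2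
    have hS20 : 0 ≤ S2 := Finset.sum_nonneg fun k _ => sq_nonneg _
    rcases eq_or_lt_of_le hS20 with h0 | hpos
    · rw [← h0, Real.zero_rpow (by norm_num)]
      exact Real.rpow_nonneg hM0 _
    · have hsq : 0 < Real.sqrt S2 := Real.sqrt_pos.mpr hpos
      set c : Fin m → ℂ :=
        fun k => (starRingEnd ℂ) (φ (g (k : ℕ))) / ((Real.sqrt S2 : ℝ) : ℂ) with hcdef
      have hck : ∀ k : Fin m, ‖c k‖ ^ 2 = ‖φ (g (k : ℕ))‖ ^ 2 / S2 := by
        intro k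
        rw [hcdef]
        simp only [norm_div, RCLike.norm_conj, Complex.norm_real, Real.norm_eq_abs,
          abs_of_nonneg (Real.sqrt_nonneg S2), div_pow]
        rw [Real.sq_sqrt hS20]
      have hcsum : ∑ k : Fin m, ‖c k‖ ^ 2 ≤ 1 := by
        rw [Finset.sum_congr rfl fun k _ => hck k, ← Finset.sum_div, ← hS2,
          div_self hpos.ne']
      have hxle := AuxFockProof.fock_sum_norm_bound n α p hα hp2 hS1 hsep hM0 hM.ge
        c hcsum g hg
      have hterm : ∀ k : Fin m, φ (c k • g (k : ℕ))
          = ((‖φ (g (k : ℕ))‖ ^ 2 : ℝ) : ℂ) / ((Real.sqrt S2 : ℝ) : ℂ) := by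
        intro k
        rw [_root_.map_smul, smul_eq_mul, hcdef, div_mul_eq_mul_div]
        congr 1
        rw [mul_comm, Complex.mul_conj, Complex.normSq_eq_norm_sq]
      have hφx : φ (∑ k : Fin m, c k • g (k : ℕ))
          = ((S2 : ℝ) : ℂ) / ((Real.sqrt S2 : ℝ) : ℂ) := by
        rw [map_sum, Finset.sum_congr rfl fun k _ => hterm k, ← Finset.sum_div]
        congr 1
        rw [hS2]
        push_cast
        rfl
      have h5 : ‖φ (∑ k : Fin m, c k • g (k : ℕ))‖ ≤ M ^ (1 / p) := by
        calc ‖φ (∑ k : Fin m, c k • g (k : ℕ))‖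
            ≤ ‖φ‖ * ‖∑ k : Fin m, c k • g (k : ℕ)‖ := φ.le_opNorm _
          _ ≤ 1 * (M ^ (1 / p)) :=
              mul_le_mul hφ1 hxle (norm_nonneg _) zero_le_one
          _ = M ^ (1 / p) := one_mul _
      rw [hφx] at h5
      have h6 : ‖((S2 : ℝ) : ℂ) / ((Real.sqrt S2 : ℝ) : ℂ)‖ = Real.sqrt S2 := by
        rw [norm_div, Complex.norm_real, Complex.norm_real, Real.norm_eq_abs,
          Real.norm_eq_abs, abs_of_nonneg hS20, abs_of_nonneg (Real.sqrt_nonneg _),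
          Real.div_sqrt]
      rw [h6] at h5
      calc S2 ^ (1 / (2:ℝ)) = Real.sqrt S2 := (Real.sqrt_eq_rpow S2).symm
        _ ≤ M ^ (1 / p) := h5
  have h1 := hT m (fun k => g (k : ℕ)) (M ^ (1 / p)) hφ
  have hA0 : 0 ≤ ∑ k : Fin m, ‖T (g (k : ℕ))‖ ^ p :=
    Finset.sum_nonneg fun k _ => Real.rpow_nonneg (norm_nonneg _) _
  have h2 : ∑ k : Fin m, ‖T (g (k : ℕ))‖ ^ p ≤ (M + 1) * C₀ ^ p := by
    have h3 := Real.rpow_le_rpow (Real.rpow_nonneg hA0 _) h1 hp0.le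
    rw [← Real.rpow_mul hA0, one_div, inv_mul_cancel₀ hp0.ne', Real.rpow_one,
      ← one_div] at h3
    calc ∑ k : Fin m, ‖T (g (k : ℕ))‖ ^ p
        ≤ (C₀ * M ^ (1 / p)) ^ p := h3
      _ = C₀ ^ p * M := by
          rw [Real.mul_rpow hC₀ (Real.rpow_nonneg hM0 _), ← Real.rpow_mul hM0,
            one_div, inv_mul_cancel₀ hp0.ne', Real.rpow_one]
      _ ≤ (M + 1) * C₀ ^ p := by nlinarith [Real.rpow_nonneg hC₀ p]
  calc ∑ j ∈ s, ENNReal.ofReal (‖T (g j)‖ ^ p)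
      ≤ ∑ j ∈ Finset.range m, ENNReal.ofReal (‖T (g j)‖ ^ p) :=
        Finset.sum_le_sum_of_subset hsub
    _ = ENNReal.ofReal (∑ j ∈ Finset.range m, ‖T (g j)‖ ^ p) :=
        (ENNReal.ofReal_sum_of_nonneg fun j _ => Real.rpow_nonneg (norm_nonneg _) _).symm
    _ ≤ ENNReal.ofReal ((M + 1) * C₀ ^ p) := by
        apply ENNReal.ofReal_le_ofReal
        rw [← Fin.sum_univ_eq_sum_range (fun j => ‖T (g j)‖ ^ p) m]
        exact h2
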